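/- Let $G$ be an $r$-regular connected graph with $3\leq k<r$, and suppose there exists $S\subseteq V(G)$ with $c(G-S)\geq (k-2)|S|+3$. Then at least four components $H$ of $G-S$ satisfy $e_G(V(H),S)<\lceil r/(k-2)\rceil$. -/

import Mathlib

open SimpleGraph

/-- The number of edges of `G` with one endpoint in `X` and the other in `S`
(for disjoint `X` and `S`). -/
noncomputable def eBetween {V : Type*} [Fintype V] (G : SimpleGraph V) (X S : Set V) : ℕ :=
  {p : V × V | p.1 ∈ X ∧ p.2 ∈ S ∧ G.Adj p.1 p.2}.ncard

/-- From any vertex `a ∉ S`, walking to a vertex of `S` yields a vertex `x` outside `S`,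
reachable from `a` in the induced graph, having a neighbor in `S`. -/
private lemma walk_to_S {V : Type*} (G : SimpleGraph V) (S : Set V) :
    ∀ (a b : V) (w : G.Walk a b), b ∈ S → ∀ ha : a ∈ Sᶜ,
    ∃ (x : ↥Sᶜ) (y : V), (G.induce Sᶜ).Reachable ⟨a, ha⟩ x ∧ y ∈ S ∧ G.Adj ↑x y := by
  intro a b w
  induction w with
  | nil => intro hb ha; exact absurd hb ha
  | @cons u v b h p ih =>
    intro hb ha
    by_cases hv : v ∈ S
    · exact ⟨⟨u, ha⟩, v, Reachable.refl _, hv, h⟩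
    · obtain ⟨x, y, hr, hy, hadj⟩ := ih hb hv
      have hadj' : (G.induce Sᶜ).Adj ⟨u, ha⟩ ⟨v, hv⟩ := by simpa using h
      exact ⟨x, y, hadj'.reachable.trans hr, hy, hadj⟩

/-- If `G` is a connected `r`-regular graph with `3 ≤ k < r` and `c(G-S) ≥ (k-2)|S| + 3`,
then at least four components `H` of `G - S` satisfy `e_G(V(H), S) < ⌈r/(k-2)⌉`. -/
theorem four_components_few_edges {V : Type*} [Fintype V] [DecidableEq V]
    (G : SimpleGraph V) [DecidableRel G.Adj] (r k : ℕ) (hk : 3 ≤ k) (hkr : k < r)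
    (hconn : G.Connected) (hreg : G.IsRegularOfDegree r) (S : Finset V)
    (hc : (k - 2) * S.card + 3 ≤
      Nat.card (SimpleGraph.induce ((↑S : Set V)ᶜ) G).ConnectedComponent) :
    4 ≤ Nat.card {c : (SimpleGraph.induce ((↑S : Set V)ᶜ) G).ConnectedComponent |
      (eBetween G (Subtype.val '' c.supp) ↑S : ℤ) < ⌈(r : ℚ) / ((k : ℚ) - 2)⌉} := by
  classical
  set Sc : Set V := (↑S : Set V)ᶜ with hScdef
  set G' : SimpleGraph Sc := SimpleGraph.induce Sc G with hG'def
  haveI : Fintype G'.ConnectedComponent := Fintype.ofFinite _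
  have hNcard : Nat.card G'.ConnectedComponent = Fintype.card G'.ConnectedComponent :=
    Nat.card_eq_fintype_card
  rw [hNcard] at hc
  -- `S` is nonempty
  have hS : S.Nonempty := by
    by_contra hSe
    rw [Finset.not_nonempty_iff_eq_empty] at hSe
    have hScu : Sc = Set.univ := by simp [hScdef, hSe]
    have hGconn' : G'.Connected := by
      rw [hG'def, hScu]
      exact (induceUnivIso G).connected_iff.mpr hconn
    haveI := hGconn'.preconnected.subsingleton_connectedComponent
    haveI : Nonempty G'.ConnectedComponent := by
      obtain ⟨v⟩ := hGconn'.nonempty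
      exact ⟨G'.connectedComponentMk v⟩
    have : Fintype.card G'.ConnectedComponent ≤ 1 := Fintype.card_le_one_iff_subsingleton.mpr ‹_›
    omega
  -- the ceiling value as a natural number
  set m : ℕ := k - 2 with hmdef
  have hm1 : 1 ≤ m := by omega
  have hmq : (0 : ℚ) < (k : ℚ) - 2 := by
    have : (3 : ℚ) ≤ (k : ℚ) := by exact_mod_cast hk
    linarith
  have hr0 : 0 < r := by omega
  have hceil_pos : 0 < ⌈(r : ℚ) / ((k : ℚ) - 2)⌉ :=
    Int.ceil_pos.mpr (div_pos (by exact_mod_cast hr0) hmq)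
  set t : ℕ := (⌈(r : ℚ) / ((k : ℚ) - 2)⌉).toNat with htdef
  have ht : (t : ℤ) = ⌈(r : ℚ) / ((k : ℚ) - 2)⌉ := Int.toNat_of_nonneg hceil_pos.le
  have ht1 : 1 ≤ t := by omega
  have hkt : r ≤ m * t := by
    have h1 : (r : ℚ) / ((k : ℚ) - 2) ≤ (⌈(r : ℚ) / ((k : ℚ) - 2)⌉ : ℚ) := Int.le_ceil _
    have h2 : ((⌈(r : ℚ) / ((k : ℚ) - 2)⌉ : ℤ) : ℚ) = (t : ℚ) := by exact_mod_cast ht.symm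
    rw [h2, div_le_iff₀ hmq] at h1
    have hmk : ((m : ℚ)) = (k : ℚ) - 2 := by
      rw [hmdef]
      push_cast [Nat.cast_sub (by omega : 2 ≤ k)]
      ring
    have : (r : ℚ) ≤ (m : ℚ) * (t : ℚ) := by rw [hmk]; linarith
    exact_mod_cast this
  -- the edge finset and fibers
  set F : Finset (V × V) :=
    Finset.univ.filter (fun p : V × V => p.2 ∈ S ∧ G.Adj p.1 p.2 ∧ p.1 ∉ S) with hFdef
  set fib : G'.ConnectedComponent → Finset (V × V) :=
    fun c => F.filter (fun p => p.1 ∈ Subtype.val '' c.supp) with hfibdef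
  -- `eBetween` is the cardinality of the fiber
  have heB : ∀ c : G'.ConnectedComponent,
      eBetween G (Subtype.val '' c.supp) ↑S = (fib c).card := by
    intro c
    have hset : {p : V × V | p.1 ∈ Subtype.val '' c.supp ∧ p.2 ∈ (↑S : Set V) ∧ G.Adj p.1 p.2}
        = ↑(fib c) := by
      ext p
      simp only [hfibdef, hFdef, Finset.coe_filter, Finset.mem_filter, Finset.mem_univ, true_and,
        Set.mem_setOf_eq, Finset.mem_coe]
      constructor
      · rintro ⟨hX, hpS, hadj⟩
        refine ⟨⟨hpS, hadj, ?_⟩, hX⟩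
        obtain ⟨x, -, hxval⟩ := hX
        rw [← hxval]
        exact fun hmem => x.2 (Finset.mem_coe.mpr hmem)
      · rintro ⟨⟨hpS, hadj, _⟩, hX⟩
        exact ⟨hX, hpS, hadj⟩
    rw [eBetween, hset, Set.ncard_coe_finset]
  -- total number of edges is at most r * |S|
  have hF_le : F.card ≤ r * S.card := by
    have h1 : F.card = ∑ s ∈ S, (F.filter (fun p => p.2 = s)).card := by
      apply Finset.card_eq_sum_card_fiberwise (f := Prod.snd)
      intro p hp
      simp only [hFdef, Finset.mem_filter] at hp
      exact (Finset.mem_filter.mp (show p ∈ F from hp)).2.1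
    rw [h1]
    calc ∑ s ∈ S, (F.filter (fun p => p.2 = s)).card
        ≤ ∑ s ∈ S, r := by
          apply Finset.sum_le_sum
          intro s hs
          have : (F.filter (fun p => p.2 = s)).card ≤ (G.neighborFinset s).card := by
            apply Finset.card_le_card_of_injOn (fun p => p.1)
            · intro p hp
              simp only [hFdef, Finset.mem_coe, Finset.mem_filter] at hp
              rw [Finset.mem_coe, SimpleGraph.mem_neighborFinset]
              rw [hp.2] at hp
              exact hp.1.2.2.1.symm
            · intro p hp q hq hpq
              simp only [Finset.mem_coe, hFdef, Finset.mem_filter] at hp hq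
              exact Prod.ext hpq (hp.2.trans hq.2.symm)
          rwa [SimpleGraph.card_neighborFinset_eq_degree, hreg s] at this
      _ = r * S.card := by rw [Finset.sum_const, smul_eq_mul, mul_comm]
  -- fibers partition F
  haveI hCne : Nonempty G'.ConnectedComponent := by
    rcases lt_or_ge 0 (Fintype.card G'.ConnectedComponent) with h | h
    · exact Fintype.card_pos_iff.mp h
    · omega
  have hsum : ∑ c : G'.ConnectedComponent, (fib c).card = F.card := by
    symm
    have := Finset.card_eq_sum_card_fiberwise
      (f := fun p : V × V => if h : p.1 ∈ Sc then G'.connectedComponentMk ⟨p.1, h⟩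
        else Classical.arbitrary _)
      (s := F) (t := Finset.univ) (fun p _ => Finset.mem_univ _)
    rw [this]
    apply Finset.sum_congr rfl
    intro c _
    congr 1
    apply Finset.filter_congr
    intro p hpF
    simp only [hFdef, Finset.mem_filter] at hpF
    have hp1 : p.1 ∈ Sc := by simp [hScdef, hpF.2.2.2]
    simp only [dif_pos hp1]
    constructor
    · intro h
      refine ⟨⟨p.1, hp1⟩, ?_, rfl⟩
      rw [ConnectedComponent.mem_supp_iff]
      exact h
    · rintro ⟨x, hx, hxval⟩
      have : x = ⟨p.1, hp1⟩ := Subtype.ext hxval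
      rw [this] at hx
      exact (c.mem_supp_iff _).mp hx
  -- each fiber is nonempty
  have hone : ∀ c : G'.ConnectedComponent, 1 ≤ (fib c).card := by
    intro c
    obtain ⟨u, hu⟩ := c.exists_rep
    obtain ⟨s0, hs0⟩ := hS
    obtain ⟨w⟩ := hconn.preconnected (↑u) s0
    obtain ⟨x, y, hr, hy, hadj⟩ := walk_to_S G (↑S : Set V) (↑u) s0 w (by exact_mod_cast hs0) u.2
    rw [Finset.one_le_card]
    refine ⟨(↑x, y), ?_⟩
    simp only [hfibdef, hFdef, Finset.mem_filter, Finset.mem_univ, true_and]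
    have hyS : y ∈ S := by exact_mod_cast hy
    refine ⟨⟨hyS, hadj, x.2⟩, x, ?_, rfl⟩
    rw [ConnectedComponent.mem_supp_iff, ← hu]
    have : G'.Reachable u x := by
      convert hr using 2
    exact ConnectedComponent.sound this.symm
  -- rewrite the goal
  have hgoalset : {c : G'.ConnectedComponent |
      (eBetween G (Subtype.val '' c.supp) ↑S : ℤ) < ⌈(r : ℚ) / ((k : ℚ) - 2)⌉}
      = ↑(Finset.univ.filter (fun c : G'.ConnectedComponent => (fib c).card < t)) := by
    ext c
    simp only [Set.mem_setOf_eq, Finset.coe_filter, Finset.mem_filter, Finset.mem_univ, true_and,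
      Finset.mem_coe]
    rw [heB c, ← ht]
    exact_mod_cast Iff.rfl
  rw [hgoalset, Nat.card_coe_set_eq, Set.ncard_coe_finset]
  set P : Finset G'.ConnectedComponent :=
    Finset.univ.filter (fun c => (fib c).card < t) with hPdef
  by_contra hP4
  push_neg at hP4
  have hP3 : P.card ≤ 3 := by omega
  set Q : Finset G'.ConnectedComponent :=
    Finset.univ.filter (fun c => ¬ (fib c).card < t) with hQdef
  have hPQ : P.card + Q.card = Fintype.card G'.ConnectedComponent := by
    rw [hPdef, hQdef, Finset.card_filter_add_card_filter_not, Finset.card_univ]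
  -- sum bounds
  have hsplit : ∑ c ∈ P, (fib c).card + ∑ c ∈ Q, (fib c).card
      = ∑ c : G'.ConnectedComponent, (fib c).card := by
    rw [hPdef, hQdef]
    exact Finset.sum_filter_add_sum_filter_not _ _ _
  have hPsum : P.card ≤ ∑ c ∈ P, (fib c).card := by
    calc P.card = ∑ _c ∈ P, 1 := by simp
      _ ≤ ∑ c ∈ P, (fib c).card := Finset.sum_le_sum (fun c _ => hone c)
  have hQsum : Q.card * t ≤ ∑ c ∈ Q, (fib c).card := by
    calc Q.card * t = ∑ _c ∈ Q, t := by simp [mul_comm]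
      _ ≤ ∑ c ∈ Q, (fib c).card := by
          apply Finset.sum_le_sum
          intro c hcQ
          rw [hQdef, Finset.mem_filter] at hcQ
          omega
  -- arithmetic contradiction
  have e1 : Q.card * t + P.card ≤ r * S.card := by
    calc Q.card * t + P.card ≤ ∑ c ∈ Q, (fib c).card + ∑ c ∈ P, (fib c).card :=
          Nat.add_le_add hQsum hPsum
      _ = F.card := by rw [add_comm, hsplit, hsum]
      _ ≤ r * S.card := hF_le
  have e2 : r * S.card ≤ m * S.card * t := by
    calc r * S.card ≤ (m * t) * S.card := Nat.mul_le_mul_right _ hkt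
      _ = m * S.card * t := by ring
  have hq1 : m * S.card ≤ Q.card := by omega
  have e3 : m * S.card * t ≤ Q.card * t := Nat.mul_le_mul_right _ hq1
  have hp0 : P.card = 0 := by
    have := e1.trans (e2.trans e3)
    omega
  have hq2 : m * S.card + 3 ≤ Q.card := by omega
  have e4 : (m * S.card + 3) * t ≤ Q.card * t := Nat.mul_le_mul_right _ hq2
  have e5 : (m * S.card + 3) * t = m * S.card * t + 3 * t := by ring
  have e6 : 3 ≤ 3 * t := by omega
  -- combine: Q.card * t ≥ m*S.card*t + 3 ≥ r*S.card + 3 > r*S.card ≥ Q.card * t + P.card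
  have : m * S.card * t + 3 ≤ Q.card * t := by omega
  omega
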